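/- Let w⁽⁵⁾ : ℂ → ℂ⁶ be defined by w⁽⁵⁾(z) = (√C(5,p)·z^{p−1}·(p − (5−p)|z|²))_{p=0,…,5} (so its p = 0 entry is −5·conj(z)), and let V₀⁽⁵⁾(z) = (√C(5,k)·z^k)_{k=0,…,5}. Then for every z ∈ ℂ: (i) ⟨V₀⁽⁵⁾(z), w⁽⁵⁾(z)⟩ = 0, and (ii) ‖w⁽⁵⁾(z)‖² = 5·(1+|z|²)⁵. (In particular V₀⁽⁵⁾(z) and w⁽⁵⁾(z) are linearly independent for every z, so z ↦ span{V₀⁽⁵⁾(z), w⁽⁵⁾(z)} is a well-defined map into the Grassmannian G(2,6); it is the holomorphic curve V₀⁽⁵⁾ ⊕ V₁⁽⁵⁾ appearing in the reducible classification.) -/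

import Mathlib

open scoped BigOperators
open Complex

noncomputable def hinner {m : ℕ} (u w : Fin m → ℂ) : ℂ :=
  ∑ i, u i * (starRingEnd ℂ) (w i)

noncomputable def gram {m k : ℕ} (v : Fin k → Fin m → ℂ) : ℂ :=
  Matrix.det (Matrix.of fun i j : Fin k => hinner (v i) (v j))

noncomputable def vOne {n : ℕ} (F : ℂ → Fin n → ℂ) (z : ℂ) : Fin (n + 2) → ℂ :=
  Fin.cons 1 (Fin.cons 0 (F z))

noncomputable def vTwo {n : ℕ} (F : ℂ → Fin n → ℂ) (z : ℂ) : Fin (n + 2) → ℂ :=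
  Fin.cons 0 (Fin.cons 1 (F z))

def IsPolyMap {n : ℕ} (F : ℂ → Fin n → ℂ) : Prop :=
  ∀ i : Fin n, ∃ p : Polynomial ℂ, ∀ z : ℂ, F z i = Polynomial.eval z p

def CondA {n : ℕ} (d : ℕ) (F₁ F₂ : ℂ → Fin n → ℂ) : Prop :=
  ∀ z : ℂ,
    1 + hinner (F₁ z) (F₁ z) + hinner (F₂ z) (F₂ z) +
      (hinner (F₁ z) (F₁ z) * hinner (F₂ z) (F₂ z) -
        hinner (F₁ z) (F₂ z) * (starRingEnd ℂ) (hinner (F₁ z) (F₂ z))) =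
    (1 + (Complex.normSq z : ℂ)) ^ d

def CondB {n : ℕ} (d : ℕ) (c : ℝ) (F₁ F₂ : ℂ → Fin n → ℂ) : Prop :=
  ∀ z : ℂ,
    gram ![vOne F₁ z, vTwo F₂ z, deriv (vOne F₁) z, deriv (vTwo F₂) z] =
      (c : ℂ) * (1 + (Complex.normSq z : ℂ)) ^ (2 * d - 4)

noncomputable def F1t (t : ℝ) (z : ℂ) : Fin 4 → ℂ :=
  ![(|t - 2| : ℝ) * z ^ 3, (Real.sqrt t : ℝ) * z,
    ((Real.sqrt ((3 - t) / (4 - t)) * |t - 2| : ℝ)) * z ^ 2,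
    ((Real.sqrt (t / (4 - t)) : ℝ)) * z ^ 2]

noncomputable def F2t (t : ℝ) (z : ℂ) : Fin 4 → ℂ :=
  ![(Real.sqrt (3 - t) : ℝ) * z ^ 2, 0, (Real.sqrt (4 - t) : ℝ) * z, 0]

noncomputable def v1t (t : ℝ) (z : ℂ) : Fin 6 → ℂ := vOne (F1t t) z

noncomputable def v2t (t : ℝ) (z : ℂ) : Fin 6 → ℂ := vTwo (F2t t) z

noncomputable def V05 (z : ℂ) : Fin 6 → ℂ :=
  fun k => (Real.sqrt (Nat.choose 5 (k : ℕ)) : ℝ) * z ^ (k : ℕ)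

noncomputable def w5 (z : ℂ) : Fin 6 → ℂ :=
  fun p =>
    if p = 0 then -5 * (starRingEnd ℂ) z
    else (Real.sqrt (Nat.choose 5 (p : ℕ)) : ℝ) * z ^ ((p : ℕ) - 1) *
      (((p : ℕ) : ℂ) - ((5 - (p : ℕ) : ℕ) : ℂ) * (Complex.normSq z : ℂ))

theorem stmt19 (z : ℂ) :
    hinner (V05 z) (w5 z) = 0 ∧
      hinner (w5 z) (w5 z) = 5 * (1 + (Complex.normSq z : ℂ)) ^ 5 := by
  have h5 : ((Real.sqrt 5 : ℝ) : ℂ) * ((Real.sqrt 5 : ℝ) : ℂ) = 5 := by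
    rw [← Complex.ofReal_mul, Real.mul_self_sqrt (by norm_num : (0:ℝ) ≤ 5)]
    norm_num
  have h10 : ((Real.sqrt 10 : ℝ) : ℂ) * ((Real.sqrt 10 : ℝ) : ℂ) = 10 := by
    rw [← Complex.ofReal_mul, Real.mul_self_sqrt (by norm_num : (0:ℝ) ≤ 10)]
    norm_num
  have hns : ((Complex.normSq z : ℝ) : ℂ) = z * (starRingEnd ℂ) z := by
    rw [Complex.mul_conj]
  set a : ℂ := ((Real.sqrt 5 : ℝ) : ℂ) with hadef
  set b : ℂ := ((Real.sqrt 10 : ℝ) : ℂ) with hbdef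
  set c : ℂ := (starRingEnd ℂ) z with hc
  have w0 : w5 z 0 = -5 * c := by rw [w5, if_pos rfl]
  have w1 : w5 z 1 = a * (1 - 4 * (z * c)) := by
    rw [w5, if_neg (by decide)]
    norm_num [Nat.choose, hns, hadef]
  have w2 : w5 z 2 = b * z * (2 - 3 * (z * c)) := by
    rw [w5, if_neg (by decide)]
    norm_num [Nat.choose, hns, hbdef]
  have w3 : w5 z 3 = b * z ^ 2 * (3 - 2 * (z * c)) := by
    rw [w5, if_neg (by decide)]
    norm_num [Nat.choose, hns, hbdef, show ((3 : Fin 6) : ℕ) = 3 from rfl]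
  have w4 : w5 z 4 = a * z ^ 3 * (4 - z * c) := by
    rw [w5, if_neg (by decide)]
    norm_num [Nat.choose, hns, hadef, show ((4 : Fin 6) : ℕ) = 4 from rfl]
  have w5' : w5 z 5 = z ^ 4 * 5 := by
    rw [w5, if_neg (by decide)]
    norm_num [Nat.choose, show ((5 : Fin 6) : ℕ) = 5 from rfl]
  have v0 : V05 z 0 = 1 := by norm_num [V05]
  have v1 : V05 z 1 = a * z := by norm_num [V05, Nat.choose, hadef]
  have v2 : V05 z 2 = b * z ^ 2 := by norm_num [V05, Nat.choose, hbdef]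
  have v3 : V05 z 3 = b * z ^ 3 := by
    norm_num [V05, Nat.choose, hbdef, show ((3 : Fin 6) : ℕ) = 3 from rfl]
  have v4 : V05 z 4 = a * z ^ 4 := by
    norm_num [V05, Nat.choose, hadef, show ((4 : Fin 6) : ℕ) = 4 from rfl]
  have v5 : V05 z 5 = z ^ 5 := by
    norm_num [V05, Nat.choose, show ((5 : Fin 6) : ℕ) = 5 from rfl]
  have ha : (starRingEnd ℂ) a = a := by rw [hadef, Complex.conj_ofReal]
  have hb : (starRingEnd ℂ) b = b := by rw [hbdef, Complex.conj_ofReal]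
  have hcz : (starRingEnd ℂ) c = z := by rw [hc, Complex.conj_conj]
  constructor
  · simp only [hinner, Fin.sum_univ_six, w0, w1, w2, w3, w4, w5', v0, v1, v2, v3, v4, v5,
      map_mul, map_sub, map_add, map_pow, map_one, map_ofNat, map_neg, ha, hb, hcz, ← hc]
    linear_combination (z - 4 * z ^ 2 * c + 4 * z ^ 4 * c ^ 3 - z ^ 5 * c ^ 4) * h5 +
      (2 * z ^ 2 * c - 2 * z ^ 4 * c ^ 3) * h10
  · simp only [hinner, Fin.sum_univ_six, w0, w1, w2, w3, w4, w5', hns,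
      map_mul, map_sub, map_add, map_pow, map_one, map_ofNat, map_neg, ha, hb, hcz, ← hc]
    linear_combination
      (1 - 8 * z * c + 16 * z ^ 2 * c ^ 2 + 16 * z ^ 3 * c ^ 3 - 8 * z ^ 4 * c ^ 4 +
        z ^ 5 * c ^ 5) * h5 +
      (4 * z * c - 3 * z ^ 2 * c ^ 2 - 3 * z ^ 3 * c ^ 3 + 4 * z ^ 4 * c ^ 4) * h10
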